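/- In the setting of the insurance game with standard payoffs Yᵢ determined by the fair benefit shares αᵢ = E_{Q*}[(Xᵢ/S^X)(S^X − K)^+] / P((S^X − k)^+) (i = 1,…,N), the shareholder's net position satisfies P(X₀ − Y₀) = 0 and k₀ = E_{Q*}[Y₀], where Q* ∈ ∇P(S^X). -/
import Mathlib


open MeasureTheory

/-- Two random variables are comonotonic if both are nondecreasing functions
of a common random variable. -/
def Comonotone {Ω : Type*} (ξ η : Ω → ℝ) : Prop :=
  ∃ (ζ : Ω → ℝ) (f g : ℝ → ℝ), Monotone f ∧ Monotone g ∧ ξ = f ∘ ζ ∧ η = g ∘ ζ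

lemma integrable_of_bdd {Ω : Type*} [MeasurableSpace Ω] (Q : Measure Ω) [IsFiniteMeasure Q]
    {f : Ω → ℝ} (hm : Measurable f) {C : ℝ} (hb : ∀ ω, |f ω| ≤ C) : Integrable f Q :=
  (integrable_const C).mono' hm.aestronglyMeasurable (Filter.Eventually.of_forall hb)

lemma attain {Ω : Type*} [MeasurableSpace Ω]
    (P : (Ω → ℝ) → ℝ) (Q : Measure Ω) [IsProbabilityMeasure Q]
    (hdomQ : ∀ ζ : Ω → ℝ, Measurable ζ → (∃ C : ℝ, ∀ ω, |ζ ω| ≤ C) → ∫ ω, ζ ω ∂Q ≤ P ζ)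
    (hcom : ∀ ξ η : Ω → ℝ, Comonotone ξ η → P (ξ + η) = P ξ + P η)
    (SX : Ω → ℝ) (hSXm : Measurable SX) (CS : ℝ) (hSXb : ∀ ω, |SX ω| ≤ CS)
    (hQSX : ∫ ω, SX ω ∂Q = P SX)
    (f g : ℝ → ℝ) (hf : Monotone f) (hg : Monotone g) (hfg : ∀ s, f s + g s = s) :
    ∫ ω, f (SX ω) ∂Q = P (fun ω => f (SX ω)) := by
  have hfb : ∀ ω, |f (SX ω)| ≤ max |f (-CS)| |f CS| := by
    intro ω
    have h1 : -CS ≤ SX ω := by have := abs_le.1 (hSXb ω); linarith [this.1]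
    have h2 : SX ω ≤ CS := (abs_le.1 (hSXb ω)).2
    refine abs_le.2 ⟨?_, ?_⟩
    · calc -(max |f (-CS)| |f CS|) ≤ -|f (-CS)| := by
            simp [le_max_left]
        _ ≤ f (-CS) := neg_abs_le _
        _ ≤ f (SX ω) := hf h1
    · calc f (SX ω) ≤ f CS := hf h2
        _ ≤ |f CS| := le_abs_self _
        _ ≤ _ := le_max_right _ _
  have hgb : ∀ ω, |g (SX ω)| ≤ max |g (-CS)| |g CS| := by
    intro ω
    have h1 : -CS ≤ SX ω := by have := abs_le.1 (hSXb ω); linarith [this.1]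
    have h2 : SX ω ≤ CS := (abs_le.1 (hSXb ω)).2
    refine abs_le.2 ⟨?_, ?_⟩
    · calc -(max |g (-CS)| |g CS|) ≤ -|g (-CS)| := by simp [le_max_left]
        _ ≤ g (-CS) := neg_abs_le _
        _ ≤ g (SX ω) := hg h1
    · calc g (SX ω) ≤ g CS := hg h2
        _ ≤ |g CS| := le_abs_self _
        _ ≤ _ := le_max_right _ _
  have hfm : Measurable (fun ω => f (SX ω)) := (hf.measurable).comp hSXm
  have hgm : Measurable (fun ω => g (SX ω)) := (hg.measurable).comp hSXm
  have hfi : Integrable (fun ω => f (SX ω)) Q := integrable_of_bdd Q hfm hfb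
  have hgi : Integrable (fun ω => g (SX ω)) Q := integrable_of_bdd Q hgm hgb
  have hA : ∫ ω, f (SX ω) ∂Q ≤ P (fun ω => f (SX ω)) :=
    hdomQ _ hfm ⟨_, hfb⟩
  have hB : ∫ ω, g (SX ω) ∂Q ≤ P (fun ω => g (SX ω)) :=
    hdomQ _ hgm ⟨_, hgb⟩
  have hsum : ∫ ω, f (SX ω) ∂Q + ∫ ω, g (SX ω) ∂Q = P SX := by
    rw [← integral_add hfi hgi]
    rw [show (fun a => f (SX a) + g (SX a)) = SX from funext fun ω => hfg (SX ω)]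
    exact hQSX
  have hPsum : P (fun ω => f (SX ω)) + P (fun ω => g (SX ω)) = P SX := by
    have h := hcom (fun ω => f (SX ω)) (fun ω => g (SX ω)) ⟨SX, f, g, hf, hg, rfl, rfl⟩
    rw [show ((fun ω => f (SX ω)) + fun ω => g (SX ω)) = SX from funext fun ω => hfg (SX ω)] at h
    linarith
  linarith

/-- In the insurance game with standard payoffs determined by the
fair benefit shares αᵢ = E_{Q*}[(Xᵢ/S^X)(S^X−K)⁺]/P((S^X−k)⁺), the shareholder's
net position satisfies P(X₀ − Y₀) = 0 and k₀ = E_{Q*}[Y₀]. -/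
theorem stmt_15 {Ω : Type*} [MeasurableSpace Ω] (μ : Measure Ω) [IsProbabilityMeasure μ]
    (P : (Ω → ℝ) → ℝ) (S : Set (Measure Ω))
    (hSprob : ∀ Q ∈ S, IsProbabilityMeasure Q)
    (hSac : ∀ Q ∈ S, Q ≪ μ)
    (hdom : ∀ ζ : Ω → ℝ, Measurable ζ → (∃ C : ℝ, ∀ ω, |ζ ω| ≤ C) →
      ∀ Q ∈ S, ∫ ω, ζ ω ∂Q ≤ P ζ)
    (hcom : ∀ ξ η : Ω → ℝ, Comonotone ξ η → P (ξ + η) = P ξ + P η)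
    (hhom : ∀ (c : ℝ), 0 ≤ c → ∀ ξ : Ω → ℝ, P (fun ω => c * ξ ω) = c * P ξ)
    (htrans : ∀ (ξ : Ω → ℝ) (a : ℝ), P (fun ω => ξ ω + a) = P ξ + a)
    (N : ℕ) (X : Fin (N + 1) → Ω → ℝ)
    (hXpos : ∀ i ω, 0 ≤ X i ω) (hXm : ∀ i, Measurable (X i))
    (hXb : ∀ i, ∃ C : ℝ, ∀ ω, X i ω ≤ C)
    (k₀ : ℝ) (hk₀ : 0 < k₀) (hX0 : ∀ ω, X 0 ω = k₀)
    (SX : Ω → ℝ) (hSX : ∀ ω, SX ω = ∑ i ∈ Finset.univ.erase 0, X i ω)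
    (k K : ℝ) (hk : k = P SX) (hKdef : K = k + k₀)
    (hdef : 0 < P (fun ω => max (SX ω - k) 0))
    (Qstar : Measure Ω) (hQS : Qstar ∈ S) (hQSX : ∫ ω, SX ω ∂Qstar = P SX)
    (α : Fin (N + 1) → ℝ)
    (hαi : ∀ i : Fin (N + 1), i ≠ 0 → α i =
      (∫ ω, X i ω / SX ω * max (SX ω - K) 0 ∂Qstar) / P (fun ω => max (SX ω - k) 0))
    (hα0 : α 0 = 1 - ∑ i ∈ Finset.univ.erase 0, α i)
    (Y : Fin (N + 1) → Ω → ℝ)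
    (hYi : ∀ i : Fin (N + 1), i ≠ 0 → ∀ ω, Y i ω =
      (if SX ω ≤ k then X i ω + α i * (k - SX ω)
        else X i ω * min (K / SX ω) 1))
    (hY0 : ∀ ω, Y 0 ω =
      (if SX ω ≤ k then k₀ + α 0 * (k - SX ω) else max (K - SX ω) 0)) :
    P (fun ω => X 0 ω - Y 0 ω) = 0 ∧ k₀ = ∫ ω, Y 0 ω ∂Qstar := by
  haveI := hSprob Qstar hQS
  have hdomQ : ∀ ζ : Ω → ℝ, Measurable ζ → (∃ C : ℝ, ∀ ω, |ζ ω| ≤ C) →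
      ∫ ω, ζ ω ∂Qstar ≤ P ζ := fun ζ hm hb => hdom ζ hm hb Qstar hQS
  -- basic facts about SX
  have hSXm : Measurable SX := by
    rw [show SX = fun ω => ∑ i ∈ Finset.univ.erase 0, X i ω from funext hSX]
    exact Finset.measurable_sum _ fun i _ => hXm i
  have hSXnn : ∀ ω, 0 ≤ SX ω := fun ω => by
    rw [hSX]; exact Finset.sum_nonneg fun i _ => hXpos i ω
  choose C hC using hXb
  set CS : ℝ := ∑ i ∈ Finset.univ.erase 0, C i with hCS
  have hSXle : ∀ ω, SX ω ≤ CS := fun ω => by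
    rw [hSX]; exact Finset.sum_le_sum fun i _ => hC i ω
  have hSXb : ∀ ω, |SX ω| ≤ CS := fun ω =>
    abs_le.2 ⟨by linarith [hSXnn ω, hSXle ω], hSXle ω⟩
  have hknn : 0 ≤ k := by
    rw [hk, ← hQSX]; exact integral_nonneg fun ω => hSXnn ω
  subst hKdef
  -- scalar monotone functions
  have hu_mono : Monotone (fun s : ℝ => min (s - k) 0) :=
    fun a b h => min_le_min (by linarith) le_rfl
  have hmaxk_mono : Monotone (fun s : ℝ => max s k) :=
    fun a b h => max_le_max h le_rfl
  have hfk_mono : Monotone (fun s : ℝ => max (s - k) 0) :=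
    fun a b h => max_le_max (by linarith) le_rfl
  have hgk_mono : Monotone (fun s : ℝ => min s k) :=
    fun a b h => min_le_min h le_rfl
  have hfK_mono : Monotone (fun s : ℝ => max (s - (k + k₀)) 0) :=
    fun a b h => max_le_max (by linarith) le_rfl
  have hgK_mono : Monotone (fun s : ℝ => min s (k + k₀)) :=
    fun a b h => min_le_min h le_rfl
  have hv_mono : Monotone (fun s : ℝ => min (max (s - k) 0) k₀) :=
    fun a b h => min_le_min (max_le_max (by linarith) le_rfl) le_rfl
  have hgv_mono : Monotone (fun s : ℝ => min s k + max (s - (k + k₀)) 0) :=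
    fun a b h => add_le_add (min_le_min h le_rfl) (max_le_max (by linarith) le_rfl)
  -- scalar identities
  have id1 : ∀ s : ℝ, min (s - k) 0 + max s k = s := by
    intro s; simp only [min_def, max_def]; split_ifs <;> linarith
  have id3 : ∀ s : ℝ, max (s - (k + k₀)) 0 + min s (k + k₀) = s := by
    intro s; simp only [min_def, max_def]; split_ifs <;> linarith
  have id4 : ∀ s : ℝ, max (s - k) 0 + min s k = s := by
    intro s; simp only [min_def, max_def]; split_ifs <;> linarith
  have id2 : ∀ s : ℝ, min (max (s - k) 0) k₀ + (min s k + max (s - (k + k₀)) 0) = s := by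
    intro s; simp only [min_def, max_def]; split_ifs <;> linarith
  have id5 : ∀ s : ℝ, max (s - (k + k₀)) 0 + min (max (s - k) 0) k₀ = max (s - k) 0 := by
    intro s; simp only [min_def, max_def]; split_ifs <;> linarith
  -- attainment results
  have A_p : ∫ ω, max (SX ω - k) 0 ∂Qstar = P (fun ω => max (SX ω - k) 0) :=
    attain P Qstar hdomQ hcom SX hSXm CS hSXb hQSX _ _ hfk_mono hgk_mono id4
  have A_q : ∫ ω, max (SX ω - (k + k₀)) 0 ∂Qstar = P (fun ω => max (SX ω - (k + k₀)) 0) :=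
    attain P Qstar hdomQ hcom SX hSXm CS hSXb hQSX _ _ hfK_mono hgK_mono id3
  have A_u : ∫ ω, min (SX ω - k) 0 ∂Qstar = P (fun ω => min (SX ω - k) 0) :=
    attain P Qstar hdomQ hcom SX hSXm CS hSXb hQSX _ _ hu_mono hmaxk_mono id1
  have A_v : ∫ ω, min (max (SX ω - k) 0) k₀ ∂Qstar = P (fun ω => min (max (SX ω - k) 0) k₀) :=
    attain P Qstar hdomQ hcom SX hSXm CS hSXb hQSX _ _ hv_mono hgv_mono id2
  set p : ℝ := P (fun ω => max (SX ω - k) 0) with hp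
  set q : ℝ := P (fun ω => max (SX ω - (k + k₀)) 0) with hq
  set pv : ℝ := P (fun ω => min (max (SX ω - k) 0) k₀) with hpv
  -- p = q + pv
  have hpqv : p = q + pv := by
    have h := hcom (fun ω => max (SX ω - (k + k₀)) 0) (fun ω => min (max (SX ω - k) 0) k₀)
      ⟨SX, _, _, hfK_mono, hv_mono, rfl, rfl⟩
    rwa [show ((fun ω => max (SX ω - (k + k₀)) 0) + fun ω => min (max (SX ω - k) 0) k₀)
        = fun ω => max (SX ω - k) 0 from funext fun ω => id5 (SX ω)] at h
  -- P (u ∘ SX) = -p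
  have hPu : P (fun ω => min (SX ω - k) 0) = -p := by
    have h := hcom (fun ω => min (SX ω - k) 0) (fun ω => max (SX ω - k) 0)
      ⟨SX, _, _, hu_mono, hfk_mono, rfl, rfl⟩
    have h2 : ((fun ω => min (SX ω - k) 0) + fun ω => max (SX ω - k) 0)
        = fun ω => SX ω + (-k) := by
      funext ω
      simp only [Pi.add_apply, min_def, max_def]; split_ifs <;> linarith
    rw [h2, htrans SX (-k), ← hk] at h
    linarith
  -- pv ≥ 0
  have hpvnn : 0 ≤ pv := by
    have h0 : 0 ≤ ∫ ω, min (max (SX ω - k) 0) k₀ ∂Qstar :=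
      integral_nonneg fun ω => le_min (le_max_right _ _) hk₀.le
    linarith [A_v]
  -- sum of α i over i ≠ 0
  have hsum : ∑ i ∈ Finset.univ.erase 0, α i
      = (∫ ω, max (SX ω - (k + k₀)) 0 ∂Qstar) / p := by
    rw [Finset.sum_congr rfl (fun i hi => hαi i (Finset.ne_of_mem_erase hi)),
      ← Finset.sum_div]
    congr 1
    rw [← integral_finset_sum]
    · congr 1; funext ω
      rcases le_or_gt (SX ω) (k + k₀) with h | h
      · rw [max_eq_right (by linarith)]
        simp
      · have hpos : 0 < SX ω := by linarith
        rw [← Finset.sum_mul, ← Finset.sum_div, ← hSX ω, div_self (ne_of_gt hpos), one_mul]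
    · intro i hi
      refine integrable_of_bdd Qstar
        (((hXm i).div hSXm).mul ((hSXm.sub measurable_const).max measurable_const))
        (C := CS) (fun ω => ?_)
      have hXile : X i ω ≤ SX ω := by
        rw [hSX]
        exact Finset.single_le_sum (fun j _ => hXpos j ω) hi
      have hdnn : 0 ≤ X i ω / SX ω := div_nonneg (hXpos i ω) (hSXnn ω)
      have hmnn : (0:ℝ) ≤ max (SX ω - (k + k₀)) 0 := le_max_right _ _
      rw [abs_of_nonneg (mul_nonneg hdnn hmnn)]
      rcases le_or_gt (SX ω) (k + k₀) with h | h
      · rw [max_eq_right (by linarith)]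
        simpa using (hSXnn ω).trans (hSXle ω)
      · have hpos : 0 < SX ω := by linarith
        have hd1 : X i ω / SX ω ≤ 1 := (div_le_one hpos).2 hXile
        calc X i ω / SX ω * max (SX ω - (k + k₀)) 0 ≤ max (SX ω - (k + k₀)) 0 :=
              mul_le_of_le_one_left hmnn hd1
          _ ≤ SX ω := by rw [max_le_iff]; constructor <;> [linarith; exact hSXnn ω]
          _ ≤ CS := hSXle ω
  -- α 0 = pv / p
  have hα0v : α 0 * p = pv := by
    have hpne : p ≠ 0 := ne_of_gt hdef
    rw [hα0, hsum, A_q]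
    field_simp
    linarith [hpqv]
  have hα0nn : 0 ≤ α 0 := by
    nlinarith [hα0v, hpvnn, hdef]
  -- the net position Z
  have hZeq : (fun ω => X 0 ω - Y 0 ω)
      = fun ω => α 0 * min (SX ω - k) 0 + min (max (SX ω - k) 0) k₀ := by
    funext ω
    rw [hX0 ω, hY0 ω]
    rcases le_or_gt (SX ω) k with h | h
    · rw [if_pos h, min_eq_left (by linarith), max_eq_right (by linarith),
        min_eq_left hk₀.le]
      ring
    · rw [if_neg (not_le.2 h)]
      simp only [min_def, max_def]; split_ifs <;> linarith
  have hcomZ := hcom (fun ω => α 0 * min (SX ω - k) 0) (fun ω => min (max (SX ω - k) 0) k₀)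
    ⟨SX, fun s => α 0 * min (s - k) 0, fun s => min (max (s - k) 0) k₀,
      fun a b h => mul_le_mul_of_nonneg_left (hu_mono h) hα0nn, hv_mono, rfl, rfl⟩
  have hPZ : P (fun ω => X 0 ω - Y 0 ω) = 0 := by
    rw [hZeq]
    rw [show (fun ω => α 0 * min (SX ω - k) 0 + min (max (SX ω - k) 0) k₀)
      = ((fun ω => α 0 * min (SX ω - k) 0) + fun ω => min (max (SX ω - k) 0) k₀) from rfl]
    rw [hcomZ, hhom (α 0) hα0nn _, hPu, ← hpv]
    linarith
  refine ⟨hPZ, ?_⟩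
  -- integral computation
  have hui : Integrable (fun ω => min (SX ω - k) 0) Qstar := by
    refine integrable_of_bdd Qstar ((hSXm.sub measurable_const).min measurable_const)
      (C := k) fun ω => ?_
    have h1 : -k ≤ min (SX ω - k) 0 := le_min (by linarith [hSXnn ω]) (by linarith)
    rw [abs_le]
    exact ⟨by linarith, by linarith [min_le_right (SX ω - k) (0:ℝ)]⟩
  have hvi : Integrable (fun ω => min (max (SX ω - k) 0) k₀) Qstar := by
    refine integrable_of_bdd Qstar
      (((hSXm.sub measurable_const).max measurable_const).min measurable_const)
      (C := k₀) fun ω => ?_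
    rw [abs_of_nonneg (le_min (le_max_right _ _) hk₀.le)]
    exact min_le_right _ _
  have hintZ : ∫ ω, (X 0 ω - Y 0 ω) ∂Qstar = 0 := by
    have : (fun ω => X 0 ω - Y 0 ω)
        = fun ω => α 0 * min (SX ω - k) 0 + min (max (SX ω - k) 0) k₀ := hZeq
    rw [this, integral_add (hui.const_mul _) hvi, integral_const_mul, A_u, A_v, hPu]
    linear_combination -hα0v
  have hYint : Integrable (Y 0) Qstar := by
    have : Y 0 = fun ω => k₀ - (X 0 ω - Y 0 ω) := by
      funext ω; rw [hX0 ω]; ring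
    rw [this]
    exact (integrable_const k₀).sub (by
      rw [show (fun ω => X 0 ω - Y 0 ω)
        = fun ω => α 0 * min (SX ω - k) 0 + min (max (SX ω - k) 0) k₀ from hZeq]
      exact (hui.const_mul _).add hvi)
  have : ∫ ω, Y 0 ω ∂Qstar = ∫ ω, (k₀ - (X 0 ω - Y 0 ω)) ∂Qstar := by
    congr 1; funext ω; rw [hX0 ω]; ring
  rw [this, integral_sub (integrable_const k₀) (by
      rw [show (fun ω => X 0 ω - Y 0 ω)
        = fun ω => α 0 * min (SX ω - k) 0 + min (max (SX ω - k) 0) k₀ from hZeq]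
      exact (hui.const_mul _).add hvi), hintZ, integral_const]
  simp
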